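/- For a tube t of a connected simple graph G with n nodes, the facet of the graph associahedron KG corresponding to t has face poset isomorphic to the product of face posets K(G(t)) × K(G*(t)), where G(t) is the induced subgraph on t and G*(t) is the reconnected complement. -/

import Mathlib

variable {V : Type*}

/-- A tube of a graph: a nonempty proper subset of vertices inducing a connected subgraph. -/
def IsTube (G : SimpleGraph V) (s : Set V) : Prop :=
  s.Nonempty ∧ s ≠ Set.univ ∧ (G.induce s).Connected

/-- Two tubes are compatible if they are nested or far apart (their union is not connected). -/
def TubeCompatible (G : SimpleGraph V) (s t : Set V) : Prop :=
  s ⊆ t ∨ t ⊆ s ∨ ¬(G.induce (s ∪ t)).Connected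

/-- A tubing of `G`: a set of pairwise compatible tubes. -/
def Tubing (G : SimpleGraph V) : Type _ :=
  {T : Set (Set V) // (∀ s ∈ T, IsTube G s) ∧ ∀ s ∈ T, ∀ t ∈ T, TubeCompatible G s t}

/-- The face poset of the graph associahedron `KG`: tubings ordered by reverse inclusion. -/
instance (G : SimpleGraph V) : PartialOrder (Tubing G) where
  le T U := U.1 ⊆ T.1
  le_refl T := subset_rfl
  le_trans a b c h1 h2 := fun x hx => h1 (h2 hx)
  le_antisymm a b h1 h2 := Subtype.ext (subset_antisymm h2 h1)

/-- The reconnected complement `G*(t)`: vertex set `V − t`, with `a ∼ b` iff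
`{a,b} ∪ t'` is connected in `G` for some `t' ⊆ t`. -/
def reconComp (G : SimpleGraph V) (t : Set V) : SimpleGraph ↥(tᶜ) :=
  SimpleGraph.fromRel fun a b =>
    ∃ t' ⊆ t, (G.induce ({a.1, b.1} ∪ t')).Connected


open Set

/-- Reachability within a vertex set, phrased on the ambient type. -/
def Reach (G : SimpleGraph V) (s : Set V) : V → V → Prop :=
  Relation.ReflTransGen (fun x y => x ∈ s ∧ y ∈ s ∧ G.Adj x y)

lemma Reach.symm' {G : SimpleGraph V} {s : Set V} {a b : V} (h : Reach G s a b) :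
    Reach G s b a :=
  by
    induction h with
    | refl => exact Relation.ReflTransGen.refl
    | tail _ hbc ih => exact Relation.ReflTransGen.head ⟨hbc.2.1, hbc.1, hbc.2.2.symm⟩ ih

lemma Reach.trans' {G : SimpleGraph V} {s : Set V} {a b c : V}
    (h : Reach G s a b) (h' : Reach G s b c) : Reach G s a c :=
  Relation.ReflTransGen.trans h h'

lemma Reach.mono' {G : SimpleGraph V} {s u : Set V} (hsu : s ⊆ u) {a b : V}
    (h : Reach G s a b) : Reach G u a b :=
  Relation.ReflTransGen.mono (fun _ _ h => ⟨hsu h.1, hsu h.2.1, h.2.2⟩) _ _ h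

lemma reach_of_reachable {G : SimpleGraph V} {s : Set V} {a b : ↥s}
    (h : (G.induce s).Reachable a b) : Reach G s a.1 b.1 := by
  obtain ⟨w⟩ := h
  induction w with
  | nil => exact Relation.ReflTransGen.refl
  | cons h p ih =>
    exact Relation.ReflTransGen.head ⟨Subtype.coe_prop _, Subtype.coe_prop _, h⟩ ih

lemma reachable_of_reach {G : SimpleGraph V} {s : Set V} {a b : V}
    (h : Reach G s a b) (ha : a ∈ s) (hb : b ∈ s) :
    (G.induce s).Reachable ⟨a, ha⟩ ⟨b, hb⟩ := by
  induction h using Relation.ReflTransGen.head_induction_on with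
  | refl => rfl
  | head hstep _ ih =>
    exact (SimpleGraph.Adj.reachable (by exact hstep.2.2 : (G.induce s).Adj ⟨_, hstep.1⟩ ⟨_, hstep.2.1⟩)).trans (ih hstep.2.1)

lemma connected_iff_reach (G : SimpleGraph V) (s : Set V) :
    (G.induce s).Connected ↔ s.Nonempty ∧ ∀ a ∈ s, ∀ b ∈ s, Reach G s a b := by
  constructor
  · intro h
    obtain ⟨⟨x, hx⟩⟩ := h.nonempty
    exact ⟨⟨x, hx⟩, fun a ha b hb => reach_of_reachable (h.preconnected ⟨a, ha⟩ ⟨b, hb⟩)⟩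
  · rintro ⟨⟨x, hx⟩, hr⟩
    have : Nonempty ↥s := ⟨⟨x, hx⟩⟩
    exact ⟨fun a b => reachable_of_reach (hr a.1 a.2 b.1 b.2) a.2 b.2⟩

lemma Reach.single {G : SimpleGraph V} {s : Set V} {a b : V}
    (ha : a ∈ s) (hb : b ∈ s) (h : G.Adj a b) : Reach G s a b :=
  Relation.ReflTransGen.single ⟨ha, hb, h⟩

lemma conn_pair {G : SimpleGraph V} {x y : V} (h : G.Adj x y) :
    (G.induce {x, y}).Connected := by
  rw [connected_iff_reach]
  refine ⟨⟨x, by simp⟩, fun a ha b hb => ?_⟩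
  have hx : x ∈ ({x, y} : Set V) := by simp
  have hy : y ∈ ({x, y} : Set V) := by simp
  have hxy : Reach G {x, y} x y := Reach.single hx hy h
  rcases ha with rfl | rfl <;> rcases hb with rfl | rfl
  · exact Relation.ReflTransGen.refl
  · exact hxy
  · exact hxy.symm'
  · exact Relation.ReflTransGen.refl

lemma conn_union_mem {G : SimpleGraph V} {s u : Set V} (hs : (G.induce s).Connected)
    (hu : (G.induce u).Connected) {x : V} (hxs : x ∈ s) (hxu : x ∈ u) :
    (G.induce (s ∪ u)).Connected := by
  rw [connected_iff_reach] at hs hu ⊢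
  obtain ⟨-, hs⟩ := hs
  obtain ⟨-, hu⟩ := hu
  refine ⟨⟨x, Or.inl hxs⟩, fun a ha b hb => ?_⟩
  have key : ∀ c ∈ s ∪ u, Reach G (s ∪ u) c x := by
    rintro c (hc | hc)
    · exact (hs c hc x hxs).mono' subset_union_left
    · exact (hu c hc x hxu).mono' subset_union_right
  exact (key a ha).trans' (key b hb).symm'

lemma conn_union_adj {G : SimpleGraph V} {s u : Set V} (hs : (G.induce s).Connected)
    (hu : (G.induce u).Connected) {x y : V} (hxs : x ∈ s) (hyu : y ∈ u) (hxy : G.Adj x y) :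
    (G.induce (s ∪ u)).Connected := by
  rw [connected_iff_reach] at hs hu ⊢
  obtain ⟨-, hs⟩ := hs
  obtain ⟨-, hu⟩ := hu
  refine ⟨⟨x, Or.inl hxs⟩, fun a ha b hb => ?_⟩
  have step : Reach G (s ∪ u) x y := Reach.single (Or.inl hxs) (Or.inr hyu) hxy
  have key : ∀ c ∈ s ∪ u, Reach G (s ∪ u) c x := by
    rintro c (hc | hc)
    · exact (hs c hc x hxs).mono' subset_union_left
    · exact ((hu c hc y hyu).mono' subset_union_right).trans' step.symm'
  exact (key a ha).trans' (key b hb).symm'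

lemma conn_insert_adj {G : SimpleGraph V} {s : Set V} (hs : (G.induce s).Connected)
    {a x : V} (has : a ∈ s) (hx : G.Adj x a) :
    (G.induce (insert x s)).Connected := by
  have := conn_union_adj (conn_pair hx) hs (by simp : x ∈ ({x, a} : Set V)) has (by exact hx)
  have hset : ({x, a} : Set V) ∪ s = insert x s := by
    ext z; simp only [mem_union, mem_insert_iff, mem_singleton_iff]
    constructor
    · rintro ((rfl | rfl) | h) <;> simp [has, *]
    · rintro (rfl | h) <;> simp [*]
  rwa [hset] at this

/-- In a connected induced subgraph with two distinct vertices, each vertex has a neighbor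
inside the set. -/
lemma exists_adj_of_conn {G : SimpleGraph V} {s : Set V} (hs : (G.induce s).Connected)
    {a b : V} (ha : a ∈ s) (hb : b ∈ s) (hab : b ≠ a) :
    ∃ c ∈ s, G.Adj a c := by
  rw [connected_iff_reach] at hs
  have := hs.2 a ha b hb
  rcases this.cases_head with rfl | ⟨c, hc, -⟩
  · exact absurd rfl hab
  · exact ⟨c, hc.2.1, hc.2.2⟩

/-- A connected set split into two nonempty disjoint pieces has a crossing edge. -/
lemma exists_cross_adj {G : SimpleGraph V} {s u : Set V}
    (h : (G.induce (s ∪ u)).Connected) (hdisj : s ∩ u = ∅)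
    {a b : V} (ha : a ∈ s) (hb : b ∈ u) :
    ∃ x ∈ s, ∃ y ∈ u, G.Adj x y := by
  rw [connected_iff_reach] at h
  have hr := h.2 a (Or.inl ha) b (Or.inr hb)
  clear h
  have hbns : b ∉ s := fun hbs => by
    have : b ∈ s ∩ u := ⟨hbs, hb⟩
    simp [hdisj] at this
  induction hr using Relation.ReflTransGen.head_induction_on with
  | refl => exact absurd ha hbns
  | @head x c hstep _ ih =>
    rcases hstep.2.1 with hcs | hcu
    · exact ih hcs
    · exact ⟨x, ha, c, hcu, hstep.2.2⟩

/-- Transfer connectivity between an induced subgraph of an induced subgraph and the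
corresponding induced subgraph of the ambient graph. -/
lemma induce_induce_connected_iff (G : SimpleGraph V) (s : Set V) (A : Set ↥s) :
    ((G.induce s).induce A).Connected ↔ (G.induce (Subtype.val '' A)).Connected := by
  rw [connected_iff_reach, connected_iff_reach]
  constructor
  · rintro ⟨⟨x, hx⟩, hr⟩
    refine ⟨⟨x.1, x, hx, rfl⟩, ?_⟩
    rintro a ⟨a', ha', rfl⟩ b ⟨b', hb', rfl⟩
    have := hr a' ha' b' hb'
    exact Relation.ReflTransGen.lift Subtype.val
      (fun x y h => ⟨⟨x, h.1, rfl⟩, ⟨y, h.2.1, rfl⟩, h.2.2⟩) _ _ this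
  · rintro ⟨⟨x, x', hx', rfl⟩, hr⟩
    refine ⟨⟨x', hx'⟩, fun a ha b hb => ?_⟩
    have key : ∀ (u v : V), Reach G (Subtype.val '' A) u v →
        ∀ (a b : ↥s), a.1 = u → b.1 = v → a ∈ A → b ∈ A → Reach (G.induce s) A a b := by
      intro u v h
      induction h using Relation.ReflTransGen.head_induction_on with
      | refl =>
        rintro a b rfl hba ha hb
        have : a = b := Subtype.ext hba.symm
        rw [this]
        exact Relation.ReflTransGen.refl
      | @head p q hstep hrest ih =>
        rintro a b rfl rfl ha hb
        obtain ⟨⟨qq, hqs⟩, hqA, hq⟩ := hstep.2.1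
        subst hq
        exact Relation.ReflTransGen.head (b := ⟨qq, hqs⟩) ⟨ha, hqA, by exact hstep.2.2⟩
          (ih _ _ rfl rfl hqA hb)
    exact key a.1 b.1 (hr a.1 ⟨a, ha, rfl⟩ b.1 ⟨b, hb, rfl⟩) a b rfl rfl ha hb

lemma reconComp_adj {G : SimpleGraph V} {t : Set V} {a b : ↥(tᶜ)} :
    (reconComp G t).Adj a b ↔ a ≠ b ∧ ∃ t' ⊆ t, (G.induce ({a.1, b.1} ∪ t')).Connected := by
  simp only [reconComp, SimpleGraph.fromRel_adj]
  constructor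
  · rintro ⟨hne, (h | h)⟩
    · exact ⟨hne, h⟩
    · obtain ⟨t', ht', hc⟩ := h
      exact ⟨hne, t', ht', by rwa [Set.pair_comm]⟩
  · rintro ⟨hne, h⟩
    exact ⟨hne, Or.inl h⟩

lemma reconComp_adj_of_adj {G : SimpleGraph V} {t : Set V} {a b : ↥(tᶜ)}
    (h : G.Adj a.1 b.1) : (reconComp G t).Adj a b := by
  refine reconComp_adj.2 ⟨fun hab => G.irrefl (by rwa [hab] at h), ∅, empty_subset _, ?_⟩
  rw [union_empty]
  exact conn_pair h

lemma adj_of_reconComp_adj_noAdj {G : SimpleGraph V} {t : Set V} {a b : ↥(tᶜ)}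
    (h : (reconComp G t).Adj a b) (hno : ∀ τ ∈ t, ¬ G.Adj a.1 τ) : G.Adj a.1 b.1 := by
  obtain ⟨hne, t', ht', hc⟩ := reconComp_adj.1 h
  have hab : b.1 ≠ a.1 := fun e => hne (Subtype.ext e.symm)
  obtain ⟨c, hc', hadj⟩ := exists_adj_of_conn hc (by left; simp) (by left; simp) hab
  rcases hc' with (rfl | rfl) | hct
  · exact absurd hadj (G.irrefl)
  · exact hadj
  · exact absurd hadj (hno c (ht' hct))

/-- Key "down" lemma: a connected set in `G` stays connected in the reconnected
complement after removing `t`. -/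
lemma reach_reconComp_of_conn {G : SimpleGraph V} {t : Set V} {S : Set V}
    (hS : (G.induce S).Connected) {a b : V} (haS : a ∈ S) (hbS : b ∈ S)
    (hat : a ∉ t) (hbt : b ∉ t) :
    Reach (reconComp G t) (Subtype.val ⁻¹' S) (⟨a, hat⟩ : ↥(tᶜ)) ⟨b, hbt⟩ := by
  rw [connected_iff_reach] at hS
  have hr := hS.2 a haS b hbS
  clear hS
  have key : ∀ x, Reach G S x b →
      (∀ hx : x ∉ t, x ∈ S → Reach (reconComp G t) (Subtype.val ⁻¹' S) ⟨x, hx⟩ ⟨b, hbt⟩) ∧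
      (x ∈ t → ∃ c, ∃ hc : c ∉ t, c ∈ S ∧ ∃ t', t' ⊆ t ∧ t' ⊆ S ∧ x ∈ t' ∧
        (G.induce (insert c t')).Connected ∧
        Reach (reconComp G t) (Subtype.val ⁻¹' S) ⟨c, hc⟩ ⟨b, hbt⟩) := by
    intro x hx
    induction hx using Relation.ReflTransGen.head_induction_on with
    | refl =>
      refine ⟨fun hx _ => ?_, fun hbt' => absurd hbt' hbt⟩
      have : (⟨b, hx⟩ : ↥(tᶜ)) = ⟨b, hbt⟩ := rfl
      rw [this]
      exact Relation.ReflTransGen.refl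
    | @head x y hstep hrest ih =>
      obtain ⟨hxS, hyS, hadj⟩ := hstep
      constructor
      · intro hxt _
        by_cases hyt : y ∈ t
        · obtain ⟨c, hc, hcS, t', ht't, ht'S, hyt', hconn, hreach⟩ := ih.2 hyt
          by_cases hxc : x = c
          · subst hxc
            have : (⟨x, hxt⟩ : ↥(tᶜ)) = ⟨x, hc⟩ := rfl
            rw [this]; exact hreach
          · refine Relation.ReflTransGen.head ⟨hxS, hcS, ?_⟩ hreach
            refine reconComp_adj.2 ⟨fun e => hxc congr(($e).1), t', ht't, ?_⟩
            have h2 := conn_insert_adj hconn (mem_insert_iff.2 (Or.inr hyt')) hadj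
            have : ({x, c} : Set V) ∪ t' = insert x (insert c t') := by
              rw [insert_union, singleton_union]
            rwa [this]
        · exact Relation.ReflTransGen.head
            ⟨hxS, hyS, reconComp_adj_of_adj (a := ⟨x, hxt⟩) (b := ⟨y, hyt⟩) hadj⟩
            (ih.1 hyt hyS)
      · intro hxt
        by_cases hyt : y ∈ t
        · obtain ⟨c, hc, hcS, t', ht't, ht'S, hyt', hconn, hreach⟩ := ih.2 hyt
          refine ⟨c, hc, hcS, insert x t', insert_subset hxt ht't,
            insert_subset hxS ht'S, mem_insert _ _, ?_, hreach⟩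
          have h2 := conn_insert_adj hconn (mem_insert_iff.2 (Or.inr hyt')) hadj
          rwa [Set.insert_comm] at h2
        · refine ⟨y, hyt, hyS, {x}, singleton_subset_iff.2 hxt,
            singleton_subset_iff.2 hxS, rfl, ?_, ih.1 hyt hyS⟩
          have := conn_pair (G := G) hadj.symm
          rwa [show ({y, x} : Set V) = insert y {x} from rfl] at this
  exact (key a hr).1 hat haS

/-- Key "up" lemma: a connected set `C` of the reconnected complement either reconnects
through `t` (so `val '' C ∪ t` is connected in `G`), or it is already connected in `G`
and completely non-adjacent to `t`. -/
lemma conn_of_reconComp_conn {G : SimpleGraph V} {t : Set V}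
    (ht : (G.induce t).Connected) {C : Set ↥(tᶜ)}
    (hC : ((reconComp G t).induce C).Connected) :
    (G.induce (Subtype.val '' C ∪ t)).Connected ∨
      ((G.induce (Subtype.val '' C)).Connected ∧
        ∀ a ∈ Subtype.val '' C, ∀ τ ∈ t, ¬ G.Adj a τ) := by
  rw [connected_iff_reach] at hC
  obtain ⟨⟨x0, hx0⟩, hr⟩ := hC
  by_cases hADJ : ∃ a ∈ Subtype.val '' C, ∃ τ ∈ t, G.Adj a τ
  · left
    obtain ⟨a0, ha0, τ0, hτ0, hadj0⟩ := hADJ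
    rw [connected_iff_reach]
    -- each reconComp edge within C yields a Reach in val''C ∪ t
    have estep : ∀ x y : ↥(tᶜ), x ∈ C → y ∈ C → (reconComp G t).Adj x y →
        Reach G (Subtype.val '' C ∪ t) x.1 y.1 := by
      intro x y hx hy hxy
      obtain ⟨-, t', ht't, hconn⟩ := reconComp_adj.1 hxy
      rw [connected_iff_reach] at hconn
      refine (hconn.2 x.1 (by left; simp) y.1 (by left; simp)).mono' ?_
      rintro z ((rfl | rfl) | hz)
      · exact Or.inl ⟨x, hx, rfl⟩
      · exact Or.inl ⟨y, hy, rfl⟩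
      · exact Or.inr (ht't hz)
    have cstep : ∀ x y : ↥(tᶜ), x ∈ C → y ∈ C →
        Reach G (Subtype.val '' C ∪ t) x.1 y.1 := by
      intro x y hx hy
      have := hr x hx y hy
      clear hr
      induction this using Relation.ReflTransGen.head_induction_on with
      | refl => exact Relation.ReflTransGen.refl
      | @head p q hstep hrest ih =>
        exact (estep p q hstep.1 hstep.2.1 hstep.2.2).trans' (ih hstep.2.1)
    have tstep : ∀ τ ∈ t, ∀ τ' ∈ t, Reach G (Subtype.val '' C ∪ t) τ τ' := by
      intro τ hτ τ' hτ'
      exact ((connected_iff_reach G t).1 ht).2 τ hτ τ' hτ' |>.mono' subset_union_right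
    -- everything reaches a0
    have key : ∀ z ∈ Subtype.val '' C ∪ t, Reach G (Subtype.val '' C ∪ t) z a0 := by
      obtain ⟨a0', ha0', ha0e⟩ := id ha0
      rintro z (⟨z', hz', rfl⟩ | hz)
      · have := cstep z' a0' hz' ha0'
        rwa [ha0e] at this
      · refine (tstep z hz τ0 hτ0).trans' ?_
        exact (Reach.single (s := Subtype.val '' C ∪ t) (Or.inl ha0) (Or.inr hτ0) hadj0).symm'
    refine ⟨⟨a0, Or.inl ha0⟩, fun u hu v hv => (key u hu).trans' (key v hv).symm'⟩
  · right
    push_neg at hADJ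
    refine ⟨?_, hADJ⟩
    rw [connected_iff_reach]
    refine ⟨⟨x0.1, x0, hx0, rfl⟩, ?_⟩
    rintro u ⟨u', hu', rfl⟩ v ⟨v', hv', rfl⟩
    refine Relation.ReflTransGen.lift Subtype.val ?_ _ _ (hr u' hu' v' hv')
    rintro p q ⟨hp, hq, hpq⟩
    exact ⟨⟨p, hp, rfl⟩, ⟨q, hq, rfl⟩,
      adj_of_reconComp_adj_noAdj hpq (hADJ p.1 ⟨p, hp, rfl⟩)⟩

lemma conn_univ {G : SimpleGraph V} (hG : G.Connected) :
    (G.induce (univ : Set V)).Connected := by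
  rw [connected_iff_reach]
  obtain ⟨x⟩ := hG.nonempty
  refine ⟨⟨x, trivial⟩, fun a _ b _ => ?_⟩
  obtain ⟨w⟩ := hG.preconnected a b
  induction w with
  | nil => exact Relation.ReflTransGen.refl
  | cons h p ih => exact Relation.ReflTransGen.head ⟨trivial, trivial, h⟩ (ih trivial trivial)

section Constr
variable (G : SimpleGraph V) (t : Set V)

open Classical in
noncomputable def liftT (B : Set ↥(tᶜ)) : Set V :=
  if (G.induce (Subtype.val '' B ∪ t)).Connected then Subtype.val '' B ∪ t
  else Subtype.val '' B

variable {G t}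

lemma liftT_cases (B : Set ↥(tᶜ)) :
    (liftT G t B = Subtype.val '' B ∪ t ∧ (G.induce (Subtype.val '' B ∪ t)).Connected) ∨
    (liftT G t B = Subtype.val '' B ∧ ¬(G.induce (Subtype.val '' B ∪ t)).Connected) := by
  unfold liftT; split <;> simp [*]

lemma image_val_subset_compl (B : Set ↥(tᶜ)) : Subtype.val '' B ⊆ tᶜ := by
  rintro x ⟨x', -, rfl⟩; exact x'.2

lemma image_val_subset (A : Set ↥t) : Subtype.val '' A ⊆ t := by
  rintro x ⟨x', -, rfl⟩; exact x'.2

lemma preimage_liftT (B : Set ↥(tᶜ)) : Subtype.val ⁻¹' (liftT G t B) = B := by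
  have h1 : (Subtype.val ⁻¹' (Subtype.val '' B) : Set ↥(tᶜ)) = B :=
    preimage_image_eq _ Subtype.val_injective
  have h2 : (Subtype.val ⁻¹' t : Set ↥(tᶜ)) = ∅ := by
    ext x; simpa using x.2
  rcases liftT_cases B with ⟨he, -⟩ | ⟨he, -⟩ <;> rw [he]
  · rw [preimage_union, h1, h2, union_empty]
  · exact h1

lemma image_subset_liftT (B : Set ↥(tᶜ)) : Subtype.val '' B ⊆ liftT G t B := by
  rcases liftT_cases B with ⟨he, -⟩ | ⟨he, -⟩ <;> rw [he]
  exact subset_union_left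

lemma liftT_injOn : Function.Injective (liftT G t) := by
  intro B B' h
  rw [← preimage_liftT (G := G) B, ← preimage_liftT (G := G) B', h]

/-- `liftT` recovers a tube containing `t`. -/
lemma liftT_of_superset {s : Set V} (hs : (G.induce s).Connected) (hts : t ⊆ s) :
    liftT G t (Subtype.val ⁻¹' s) = s := by
  have him : Subtype.val '' ((Subtype.val ⁻¹' s : Set ↥(tᶜ))) = tᶜ ∩ s :=
    Subtype.image_preimage_coe _ _
  have hu : tᶜ ∩ s ∪ t = s := by
    ext x; constructor
    · rintro (⟨-, h⟩ | h)
      · exact h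
      · exact hts h
    · intro h
      by_cases hx : x ∈ t
      · exact Or.inr hx
      · exact Or.inl ⟨hx, h⟩
  unfold liftT
  rw [him, hu]
  simp [hs]

/-- `liftT` recovers a tube far from `t`. -/
lemma liftT_of_far {s : Set V} (hst : s ∩ t = ∅) (hfar : ¬(G.induce (s ∪ t)).Connected) :
    liftT G t (Subtype.val ⁻¹' s) = s := by
  have hsc : s ⊆ tᶜ := fun x hx hxt => by
    have : x ∈ s ∩ t := ⟨hx, hxt⟩
    simp [hst] at this
  have him : Subtype.val '' ((Subtype.val ⁻¹' s : Set ↥(tᶜ))) = s := by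
    rw [Subtype.image_preimage_coe]
    exact inter_eq_self_of_subset_right hsc
  unfold liftT
  rw [him]
  simp [hfar]

/-- A tube of the reconnected complement that is "far" (its lift does not reconnect
through `t`) is connected in `G` and non-adjacent to `t`. -/
lemma far_props (ht : IsTube G t) {B : Set ↥(tᶜ)} (hB : ((reconComp G t).induce B).Connected)
    (hfar : ¬(G.induce (Subtype.val '' B ∪ t)).Connected) :
    (G.induce (Subtype.val '' B)).Connected ∧
      ∀ a ∈ Subtype.val '' B, ∀ τ ∈ t, ¬ G.Adj a τ :=
  (conn_of_reconComp_conn ht.2.2 hB).resolve_left hfar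

/-- the lift of a tube of the reconnected complement is a tube of `G`. -/
lemma isTube_liftT (ht : IsTube G t) {B : Set ↥(tᶜ)} (hB : IsTube (reconComp G t) B) :
    IsTube G (liftT G t B) := by
  obtain ⟨hBne, hBuniv, hBconn⟩ := hB
  rcases liftT_cases (G := G) B with ⟨he, hc⟩ | ⟨he, hc⟩ <;> rw [he]
  · refine ⟨⟨ht.1.choose, Or.inr ht.1.choose_spec⟩, ?_, hc⟩
    intro huniv
    apply hBuniv
    ext x
    simp only [mem_univ, iff_true]
    have : x.1 ∈ Subtype.val '' B ∪ t := huniv ▸ trivial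
    rcases this with ⟨x', hx', he'⟩ | hxt
    · rwa [show x = x' from Subtype.ext he'.symm]
    · exact absurd hxt x.2
  · obtain ⟨hconn, -⟩ := far_props ht hBconn hc
    refine ⟨hBne.image _, ?_, hconn⟩
    intro huniv
    obtain ⟨x, hx⟩ := ht.1
    have : x ∈ Subtype.val '' B := huniv ▸ trivial
    exact absurd hx (image_val_subset_compl B this ∘ fun h => h)

/-- tubes of `G` in a tubing containing `t` restrict to tubes of the reconnected complement. -/
lemma isTube_of_liftT {B : Set ↥(tᶜ)} (hBne : B.Nonempty)
    (hlift : IsTube G (liftT G t B)) (hGc : G.Connected) : IsTube (reconComp G t) B := by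
  refine ⟨hBne, ?_, ?_⟩
  · rintro rfl
    have himage : Subtype.val '' (univ : Set ↥(tᶜ)) = tᶜ := by
      ext x; constructor
      · rintro ⟨x', -, rfl⟩; exact x'.2
      · intro hx; exact ⟨⟨x, hx⟩, trivial, rfl⟩
    have : liftT G t (univ : Set ↥(tᶜ)) = univ := by
      unfold liftT
      rw [himage, compl_union_self]
      simp [conn_univ hGc]
    rw [this] at hlift
    exact hlift.2.1 rfl
  · -- connectivity in reconComp via the down lemma
    have hSconn : (G.induce (liftT G t B)).Connected := hlift.2.2
    rw [connected_iff_reach]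
    refine ⟨hBne, fun x hx y hy => ?_⟩
    have hxS : x.1 ∈ liftT G t B := image_subset_liftT B ⟨x, hx, rfl⟩
    have hyS : y.1 ∈ liftT G t B := image_subset_liftT B ⟨y, hy, rfl⟩
    have := reach_reconComp_of_conn hSconn hxS hyS x.2 y.2
    rw [preimage_liftT] at this
    simpa using this

end Constr

section Constr2
variable {G : SimpleGraph V} {t : Set V}

lemma TubeCompatible.symm {s u : Set V} (h : TubeCompatible G s u) : TubeCompatible G u s := by
  rcases h with h | h | h
  · exact Or.inr (Or.inl h)
  · exact Or.inl h
  · exact Or.inr (Or.inr (by rwa [union_comm]))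

lemma image_val_univ (s : Set V) : Subtype.val '' (univ : Set ↥s) = s := by simp

variable (G t)

def phi1 (T : Set (Set V)) : Set (Set ↥t) :=
  {A | Subtype.val '' A ∈ T ∧ Subtype.val '' A ≠ t}

def phi2 (T : Set (Set V)) : Set (Set ↥(tᶜ)) :=
  {B | B.Nonempty ∧ liftT G t B ∈ T}

noncomputable def psi (T₁ : Set (Set ↥t)) (T₂ : Set (Set ↥(tᶜ))) : Set (Set V) :=
  insert t ((fun A => Subtype.val '' A) '' T₁ ∪ liftT G t '' T₂)

variable {G t}

lemma phi1_isTube {T : Set (Set V)} (hT : ∀ s ∈ T, IsTube G s)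
    {A : Set ↥t} (hA : A ∈ phi1 t T) : IsTube (G.induce t) A := by
  obtain ⟨hmem, hne⟩ := hA
  obtain ⟨hne', huniv', hconn'⟩ := hT _ hmem
  refine ⟨?_, ?_, ?_⟩
  · rwa [image_nonempty] at hne'
  · rintro rfl
    exact hne (image_val_univ t)
  · rwa [induce_induce_connected_iff]

lemma phi1_compat {T : Set (Set V)}
    (hTc : ∀ s ∈ T, ∀ u ∈ T, TubeCompatible G s u)
    {A A' : Set ↥t} (hA : A ∈ phi1 t T) (hA' : A' ∈ phi1 t T) :
    TubeCompatible (G.induce t) A A' := by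
  rcases hTc _ hA.1 _ hA'.1 with h | h | h
  · exact Or.inl ((image_subset_image_iff Subtype.val_injective).1 h)
  · exact Or.inr (Or.inl ((image_subset_image_iff Subtype.val_injective).1 h))
  · refine Or.inr (Or.inr ?_)
    rw [induce_induce_connected_iff, image_union]
    exact h

lemma phi2_isTube (hG : G.Connected) {T : Set (Set V)} (hT : ∀ s ∈ T, IsTube G s)
    {B : Set ↥(tᶜ)} (hB : B ∈ phi2 G t T) : IsTube (reconComp G t) B :=
  isTube_of_liftT hB.1 (hT _ hB.2) hG

lemma phi2_compat (ht : IsTube G t) {T : Set (Set V)} (hT : ∀ s ∈ T, IsTube G s)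
    (hTc : ∀ s ∈ T, ∀ u ∈ T, TubeCompatible G s u) (hG : G.Connected)
    {B B' : Set ↥(tᶜ)} (hB : B ∈ phi2 G t T) (hB' : B' ∈ phi2 G t T) :
    TubeCompatible (reconComp G t) B B' := by
  have hBt := phi2_isTube hG hT hB
  have hB't := phi2_isTube hG hT hB'
  rcases hTc _ hB.2 _ hB'.2 with h | h | h
  · refine Or.inl ?_
    rw [← preimage_liftT (G := G) B, ← preimage_liftT (G := G) B']
    exact preimage_mono h
  · refine Or.inr (Or.inl ?_)
    rw [← preimage_liftT (G := G) B, ← preimage_liftT (G := G) B']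
    exact preimage_mono h
  · refine Or.inr (Or.inr fun hcc => h ?_)
    -- from connectivity of B ∪ B' in reconComp derive connectivity of union of lifts
    have himg : Subtype.val '' (B ∪ B') = Subtype.val '' B ∪ Subtype.val '' B' :=
      image_union _ _ _
    obtain ⟨x, hx⟩ := hBt.1
    obtain ⟨τ, hτ⟩ := ht.1
    have hdisjB : (Subtype.val '' B) ∩ t = ∅ := by
      ext z; simp only [mem_inter_iff, mem_empty_iff_false, iff_false, not_and]
      rintro ⟨z', -, rfl⟩
      exact z'.2
    have hdisjB' : (Subtype.val '' B') ∩ t = ∅ := by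
      ext z; simp only [mem_inter_iff, mem_empty_iff_false, iff_false, not_and]
      rintro ⟨z', -, rfl⟩
      exact z'.2
    have hdisjU : (Subtype.val '' (B ∪ B')) ∩ t = ∅ := by
      ext z; simp only [mem_inter_iff, mem_empty_iff_false, iff_false, not_and]
      rintro ⟨z', -, rfl⟩
      exact z'.2
    obtain ⟨x', hx'⟩ := hB't.1
    rcases conn_of_reconComp_conn ht.2.2 hcc with hconn | ⟨hconn, hnoadj⟩
    · -- the union reconnects through t: at least one lift must be of the ∪ t form
      have key : ∀ X : Set V, X = Subtype.val '' (B ∪ B') ∪ t → (G.induce X).Connected :=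
        fun X hX => hX ▸ hconn
      rcases liftT_cases (G := G) B with ⟨he, hc⟩ | ⟨he, hc⟩ <;>
        rcases liftT_cases (G := G) B' with ⟨he', hc'⟩ | ⟨he', hc'⟩ <;>
        rw [he, he']
      · refine key _ ?_
        rw [image_union]; ext z; simp only [mem_union]; tauto
      · refine key _ ?_
        rw [image_union]; ext z; simp only [mem_union]; tauto
      · refine key _ ?_
        rw [image_union]; ext z; simp only [mem_union]; tauto
      · exfalso
        have hxU : x.1 ∈ Subtype.val '' (B ∪ B') := ⟨x, Or.inl hx, rfl⟩
        obtain ⟨z, hz, y, hy, hadj⟩ := exists_cross_adj hconn hdisjU hxU hτ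
        rcases (himg ▸ hz : z ∈ Subtype.val '' B ∪ Subtype.val '' B') with hzB | hzB'
        · exact (far_props ht hBt.2.2 hc).2 z hzB y hy hadj
        · exact (far_props ht hB't.2.2 hc').2 z hzB' y hy hadj
    · -- the union does not touch t: both lifts must be far
      rcases liftT_cases (G := G) B with ⟨he, hc⟩ | ⟨he, hc⟩ <;>
        rcases liftT_cases (G := G) B' with ⟨he', hc'⟩ | ⟨he', hc'⟩ <;>
        rw [he, he']
      · exfalso
        obtain ⟨z, hz, y, hy, hadj⟩ := exists_cross_adj hc hdisjB ⟨x, hx, rfl⟩ hτ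
        exact hnoadj z (himg ▸ Or.inl hz) y hy hadj
      · exfalso
        obtain ⟨z, hz, y, hy, hadj⟩ := exists_cross_adj hc hdisjB ⟨x, hx, rfl⟩ hτ
        exact hnoadj z (himg ▸ Or.inl hz) y hy hadj
      · exfalso
        obtain ⟨z, hz, y, hy, hadj⟩ := exists_cross_adj hc' hdisjB' ⟨x', hx', rfl⟩ hτ
        exact hnoadj z (himg ▸ Or.inr hz) y hy hadj
      · rw [← himg]
        exact hconn

end Constr2

section Constr3
variable {G : SimpleGraph V} {t : Set V}

lemma liftT_subset_union (B : Set ↥(tᶜ)) : liftT G t B ⊆ Subtype.val '' B ∪ t := by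
  rcases liftT_cases (G := G) B with ⟨he, -⟩ | ⟨he, -⟩ <;> rw [he]
  exact subset_union_left

lemma isTube_image_val (ht : IsTube G t) {A : Set ↥t} (hA : IsTube (G.induce t) A) :
    IsTube G (Subtype.val '' A) := by
  refine ⟨hA.1.image _, ?_, (induce_induce_connected_iff G t A).1 hA.2.2⟩
  intro huniv
  exact ht.2.1 (eq_univ_of_univ_subset (huniv ▸ image_val_subset A))

lemma compat_t_liftT {B : Set ↥(tᶜ)} : TubeCompatible G t (liftT G t B) := by
  rcases liftT_cases (G := G) B with ⟨he, hc⟩ | ⟨he, hc⟩ <;> rw [he]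
  · exact Or.inl subset_union_right
  · exact Or.inr (Or.inr (by rwa [union_comm]))

lemma compat_image_liftT (ht : IsTube G t) {A : Set ↥t} {B : Set ↥(tᶜ)}
    (hAne : A.Nonempty) (hB : IsTube (reconComp G t) B) :
    TubeCompatible G (Subtype.val '' A) (liftT G t B) := by
  rcases liftT_cases (G := G) B with ⟨he, hc⟩ | ⟨he, hc⟩ <;> rw [he]
  · exact Or.inl ((image_val_subset A).trans subset_union_right)
  · refine Or.inr (Or.inr fun hconn => ?_)
    obtain ⟨a, ha⟩ := hAne
    obtain ⟨b, hb⟩ := hB.1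
    have hdisj : (Subtype.val '' A) ∩ (Subtype.val '' B) = ∅ := by
      ext z; simp only [mem_inter_iff, mem_empty_iff_false, iff_false, not_and]
      rintro ⟨z', -, rfl⟩ ⟨z'', -, he''⟩
      exact z''.2 (he'' ▸ z'.2)
    obtain ⟨z, hz, y, hy, hadj⟩ := exists_cross_adj hconn hdisj
      (⟨a, ha, rfl⟩ : a.1 ∈ Subtype.val '' A) ⟨b, hb, rfl⟩
    exact (far_props ht hB.2.2 hc).2 y hy z (image_val_subset A hz) hadj.symm

lemma liftT_subset_of_subset (ht : IsTube G t) {B B' : Set ↥(tᶜ)}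
    (hB : IsTube (reconComp G t) B) (hB' : IsTube (reconComp G t) B')
    (hsub : B ⊆ B') : liftT G t B ⊆ liftT G t B' := by
  rcases liftT_cases (G := G) B' with ⟨he', hc'⟩ | ⟨he', hc'⟩ <;> rw [he']
  · exact (liftT_subset_union B).trans (union_subset_union_left _ (image_mono hsub))
  · rcases liftT_cases (G := G) B with ⟨he, hc⟩ | ⟨he, hc⟩ <;> rw [he]
    · exfalso
      obtain ⟨b, hb⟩ := hB.1
      obtain ⟨τ, hτ⟩ := ht.1
      have hdisj : (Subtype.val '' B) ∩ t = ∅ := by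
        ext z; simp only [mem_inter_iff, mem_empty_iff_false, iff_false, not_and]
        rintro ⟨z', -, rfl⟩
        exact z'.2
      obtain ⟨z, hz, y, hy, hadj⟩ := exists_cross_adj hc hdisj
        (⟨b, hb, rfl⟩ : b.1 ∈ Subtype.val '' B) hτ
      exact (far_props ht hB'.2.2 hc').2 z (image_mono hsub hz) y hy hadj
    · exact image_mono hsub

lemma not_conn_liftT_union {B B' : Set ↥(tᶜ)} (hBne : B.Nonempty)
    (hncc : ¬((reconComp G t).induce (B ∪ B')).Connected) :
    ¬(G.induce (liftT G t B ∪ liftT G t B')).Connected := by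
  intro hconn
  apply hncc
  rw [connected_iff_reach]
  refine ⟨hBne.mono subset_union_left, fun x hx y hy => ?_⟩
  have hxS : x.1 ∈ liftT G t B ∪ liftT G t B' := by
    rcases hx with hx | hx
    · exact Or.inl (image_subset_liftT B ⟨x, hx, rfl⟩)
    · exact Or.inr (image_subset_liftT B' ⟨x, hx, rfl⟩)
  have hyS : y.1 ∈ liftT G t B ∪ liftT G t B' := by
    rcases hy with hy | hy
    · exact Or.inl (image_subset_liftT B ⟨y, hy, rfl⟩)
    · exact Or.inr (image_subset_liftT B' ⟨y, hy, rfl⟩)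
  have := reach_reconComp_of_conn hconn hxS hyS x.2 y.2
  rw [preimage_union, preimage_liftT, preimage_liftT] at this
  simpa using this

lemma compat_liftT_liftT (ht : IsTube G t) {B B' : Set ↥(tᶜ)}
    (hB : IsTube (reconComp G t) B) (hB' : IsTube (reconComp G t) B')
    (h : TubeCompatible (reconComp G t) B B') :
    TubeCompatible G (liftT G t B) (liftT G t B') := by
  rcases h with h | h | h
  · exact Or.inl (liftT_subset_of_subset ht hB hB' h)
  · exact Or.inr (Or.inl (liftT_subset_of_subset ht hB' hB h))
  · exact Or.inr (Or.inr (not_conn_liftT_union hB.1 h))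

lemma compat_image_image {A A' : Set ↥t} (h : TubeCompatible (G.induce t) A A') :
    TubeCompatible G (Subtype.val '' A) (Subtype.val '' A') := by
  rcases h with h | h | h
  · exact Or.inl (image_mono h)
  · exact Or.inr (Or.inl (image_mono h))
  · refine Or.inr (Or.inr fun hconn => h ?_)
    rw [induce_induce_connected_iff, image_union]
    exact hconn

/-- `psi` produces a tubing. -/
lemma psi_isTubing (hG : G.Connected) (ht : IsTube G t)
    {T₁ : Set (Set ↥t)} {T₂ : Set (Set ↥(tᶜ))}
    (hT₁ : ∀ A ∈ T₁, IsTube (G.induce t) A)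
    (hT₁c : ∀ A ∈ T₁, ∀ A' ∈ T₁, TubeCompatible (G.induce t) A A')
    (hT₂ : ∀ B ∈ T₂, IsTube (reconComp G t) B)
    (hT₂c : ∀ B ∈ T₂, ∀ B' ∈ T₂, TubeCompatible (reconComp G t) B B') :
    (∀ s ∈ psi G t T₁ T₂, IsTube G s) ∧
      (∀ s ∈ psi G t T₁ T₂, ∀ u ∈ psi G t T₁ T₂, TubeCompatible G s u) := by
  constructor
  · rintro s (rfl | ⟨A, hA, rfl⟩ | ⟨B, hB, rfl⟩)
    · exact ht
    · exact isTube_image_val ht (hT₁ _ hA)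
    · exact isTube_liftT ht (hT₂ _ hB)
  · rintro s (rfl | ⟨A, hA, rfl⟩ | ⟨B, hB, rfl⟩) u (rfl | ⟨A', hA', rfl⟩ | ⟨B', hB', rfl⟩)
    · exact Or.inl subset_rfl
    · exact TubeCompatible.symm (Or.inl (image_val_subset A'))
    · exact compat_t_liftT
    · exact Or.inl (image_val_subset A)
    · exact compat_image_image (hT₁c _ hA _ hA')
    · exact compat_image_liftT ht (hT₁ _ hA).1 (hT₂ _ hB')
    · exact TubeCompatible.symm compat_t_liftT
    · exact TubeCompatible.symm (compat_image_liftT ht (hT₁ _ hA').1 (hT₂ _ hB))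
    · exact compat_liftT_liftT ht (hT₂ _ hB) (hT₂ _ hB') (hT₂c _ hB _ hB')

end Constr3

section Constr4
variable {G : SimpleGraph V} {t : Set V}

lemma psi_phi_eq (ht : IsTube G t) {T : Set (Set V)} (hT : ∀ s ∈ T, IsTube G s)
    (hTc : ∀ s ∈ T, ∀ u ∈ T, TubeCompatible G s u) (htT : t ∈ T) :
    psi G t (phi1 t T) (phi2 G t T) = T := by
  apply subset_antisymm
  · rintro s (rfl | ⟨A, hA, rfl⟩ | ⟨B, hB, rfl⟩)
    · exact htT
    · exact hA.1
    · exact hB.2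
  · intro s hs
    by_cases hst : s = t
    · exact hst ▸ mem_insert _ _
    rcases hTc s hs t htT with hsub | hsub | hfar
    · have him : Subtype.val '' (Subtype.val ⁻¹' s : Set ↥t) = s := by
        rw [Subtype.image_preimage_coe, inter_eq_self_of_subset_right hsub]
      exact Or.inr (Or.inl ⟨Subtype.val ⁻¹' s,
        ⟨by rw [him]; exact hs, by rw [him]; exact hst⟩, him⟩)
    · obtain ⟨x, hxs, hxt⟩ := not_subset.1 (fun h => hst (subset_antisymm h hsub))
      have hlift : liftT G t (Subtype.val ⁻¹' s : Set ↥(tᶜ)) = s :=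
        liftT_of_superset (hT s hs).2.2 hsub
      exact Or.inr (Or.inr ⟨Subtype.val ⁻¹' s,
        ⟨⟨⟨x, hxt⟩, hxs⟩, by rw [hlift]; exact hs⟩, hlift⟩)
    · have hdisj : s ∩ t = ∅ := by
        by_contra hne
        obtain ⟨x, hxs, hxt⟩ := nonempty_iff_ne_empty.2 hne
        exact hfar (conn_union_mem (hT s hs).2.2 ht.2.2 hxs hxt)
      have hsc : s ⊆ tᶜ := fun x hx hxt => by
        have : x ∈ s ∩ t := ⟨hx, hxt⟩
        simp [hdisj] at this
      obtain ⟨x, hxs⟩ := (hT s hs).1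
      have hlift : liftT G t (Subtype.val ⁻¹' s : Set ↥(tᶜ)) = s :=
        liftT_of_far hdisj hfar
      exact Or.inr (Or.inr ⟨Subtype.val ⁻¹' s,
        ⟨⟨⟨x, hsc hxs⟩, hxs⟩, by rw [hlift]; exact hs⟩, hlift⟩)

lemma phi1_psi_eq {T₁ : Set (Set ↥t)} {T₂ : Set (Set ↥(tᶜ))}
    (hT₁ : ∀ A ∈ T₁, IsTube (G.induce t) A)
    (hT₂ : ∀ B ∈ T₂, IsTube (reconComp G t) B) :
    phi1 t (psi G t T₁ T₂) = T₁ := by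
  ext A
  constructor
  · rintro ⟨hmem, hne⟩
    rcases hmem with heq | ⟨A', hA', heq⟩ | ⟨B, hB, heq⟩
    · exact absurd heq hne
    · have : A' = A := image_injective.2 Subtype.val_injective heq
      rwa [← this]
    · exfalso
      obtain ⟨x, hx⟩ := (hT₂ B hB).1
      have hxl : x.1 ∈ Subtype.val '' A := by
        rw [← heq]; exact image_subset_liftT B ⟨x, hx, rfl⟩
      exact x.2 (image_val_subset A hxl)
  · intro hA
    refine ⟨Or.inr (Or.inl ⟨A, hA, rfl⟩), fun heq => (hT₁ A hA).2.1 ?_⟩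
    exact image_injective.2 Subtype.val_injective (heq.trans (image_val_univ t).symm)

lemma phi2_psi_eq {T₁ : Set (Set ↥t)} {T₂ : Set (Set ↥(tᶜ))}
    (hT₂ : ∀ B ∈ T₂, IsTube (reconComp G t) B) :
    phi2 G t (psi G t T₁ T₂) = T₂ := by
  ext B
  constructor
  · rintro ⟨hne, hmem⟩
    obtain ⟨x, hx⟩ := hne
    have hxl : x.1 ∈ liftT G t B := image_subset_liftT B ⟨x, hx, rfl⟩
    rcases hmem with heq | ⟨A, hA, heq⟩ | ⟨B', hB', heq⟩
    · rw [heq] at hxl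
      exact absurd hxl x.2
    · rw [← heq] at hxl
      exact absurd (image_val_subset A hxl) x.2
    · have : B' = B := liftT_injOn heq
      rwa [← this]
  · intro hB
    exact ⟨(hT₂ B hB).1, Or.inr (Or.inr ⟨B, hB, rfl⟩)⟩

lemma psi_mono {T₁ T₁' : Set (Set ↥t)} {T₂ T₂' : Set (Set ↥(tᶜ))}
    (h₁ : T₁ ⊆ T₁') (h₂ : T₂ ⊆ T₂') : psi G t T₁ T₂ ⊆ psi G t T₁' T₂' :=
  insert_subset_insert (union_subset_union (image_mono h₁) (image_mono h₂))

theorem facet_face_poset_iso' (G : SimpleGraph V) (hG : G.Connected)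
    (t : Set V) (ht : IsTube G t) :
    Nonempty ({T : Tubing G // t ∈ T.1} ≃o
      (Tubing (G.induce t) × Tubing (reconComp G t))) := by
  refine ⟨⟨⟨?_, ?_, ?_, ?_⟩, ?_⟩⟩
  · -- toFun
    exact fun T =>
      (⟨phi1 t T.1.1, fun A hA => phi1_isTube T.1.2.1 hA,
          fun A hA A' hA' => phi1_compat T.1.2.2 hA hA'⟩,
       ⟨phi2 G t T.1.1, fun B hB => phi2_isTube hG T.1.2.1 hB,
          fun B hB B' hB' => phi2_compat ht T.1.2.1 T.1.2.2 hG hB hB'⟩)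
  · -- invFun
    exact fun P =>
      ⟨⟨psi G t P.1.1 P.2.1,
        (psi_isTubing hG ht P.1.2.1 P.1.2.2 P.2.2.1 P.2.2.2).1,
        (psi_isTubing hG ht P.1.2.1 P.1.2.2 P.2.2.1 P.2.2.2).2⟩,
       mem_insert _ _⟩
  · -- left inverse
    intro T
    exact Subtype.ext (Subtype.ext (psi_phi_eq ht T.1.2.1 T.1.2.2 T.2))
  · -- right inverse
    intro P
    refine Prod.ext ?_ ?_
    · exact Subtype.ext (phi1_psi_eq P.1.2.1 P.2.2.1)
    · exact Subtype.ext (phi2_psi_eq P.2.2.1)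
  · -- map_rel_iff
    intro T T'
    constructor
    · rintro ⟨h₁, h₂⟩
      show T'.1.1 ⊆ T.1.1
      rw [← psi_phi_eq ht T'.1.2.1 T'.1.2.2 T'.2, ← psi_phi_eq ht T.1.2.1 T.1.2.2 T.2]
      exact psi_mono h₁ h₂
    · intro h
      exact ⟨fun A hA => ⟨h hA.1, hA.2⟩, fun B hB => ⟨hB.1, h hB.2⟩⟩

end Constr4

/-- Carr–Devadoss: for a tube `t` of a connected graph `G`, the facet of the graph
associahedron `KG` corresponding to `t` (the tubings containing `t`) has face poset
isomorphic to the product of the face posets of `K(G(t))` and `K(G*(t))`. -/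
theorem facet_face_poset_iso (G : SimpleGraph V) (hG : G.Connected)
    (t : Set V) (ht : IsTube G t) :
    Nonempty ({T : Tubing G // t ∈ T.1} ≃o
      (Tubing (G.induce t) × Tubing (reconComp G t))) := by
  exact facet_face_poset_iso' G hG t ht
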